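/- For all real numbers x ≥ 3 and l ≥ 2, the inequality f(x,l) ≥ x(x+1)²·f(x+1, l(1 − 1/(6(x+1)))) holds. -/

import Mathlib

/-- The function `f(x,l) = x · (Γ(x·l⁷ + 1)/Γ(x+1))³. -/
noncomputable def fGamma (x l : ℝ) : ℝ :=
  x * (Real.Gamma (x * l ^ 7 + 1) / Real.Gamma (x + 1)) ^ 3

theorem fGamma_recursive_bound (x l : ℝ) (hx : 3 ≤ x) (hl : 2 ≤ l) :
    x * (x + 1) ^ 2 * fGamma (x + 1) (l * (1 - 1 / (6 * (x + 1)))) ≤ fGamma x l := by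
  have hx0 : (0:ℝ) < x := by linarith
  have hx1 : (0:ℝ) < x + 1 := by linarith
  set u : ℝ := 1 / (6 * (x + 1)) with hu
  have hu0 : 0 < u := by positivity
  have hu1 : u ≤ 1 / 24 := by
    rw [hu, div_le_div_iff₀ (by positivity) (by norm_num)]
    linarith
  have hu' : (x + 1) * u = 1 / 6 := by
    field_simp [hu]
    rw [hu]
    field_simp
  have h1u : (0:ℝ) < 1 - u := by linarith
  have hl' : 1 ≤ l * (1 - u) := by nlinarith
  -- key polynomial inequality: (x+1)*(1-u)^7 ≤ x
  have hkey : (x + 1) * (1 - u) ^ 7 ≤ x := by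
    have h35 : 0 ≤ 35 - 35 * u + 21 * u ^ 2 - 7 * u ^ 3 + u ^ 4 := by
      nlinarith [pow_nonneg hu0.le 2, pow_nonneg hu0.le 3, pow_nonneg hu0.le 4]
    have h7 : (1 - u) ^ 7 ≤ 1 - 7 * u + 21 * u ^ 2 := by
      have hid : 1 - 7 * u + 21 * u ^ 2 - (1 - u) ^ 7
          = u ^ 3 * (35 - 35 * u + 21 * u ^ 2 - 7 * u ^ 3 + u ^ 4) := by ring
      nlinarith [mul_nonneg (pow_nonneg hu0.le 3) h35]
    have : (x + 1) * (1 - 7 * u + 21 * u ^ 2) ≤ x := by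
      have hux : u * (x + 1) = 1 / 6 := by linarith [hu']
      nlinarith [sq_nonneg u, hu0.le, hu1]
    nlinarith [hx1.le]
  -- argument comparison
  have hlpow : (0:ℝ) < l ^ 7 := by positivity
  have harg : (x + 1) * (l * (1 - u)) ^ 7 ≤ x * l ^ 7 := by
    have : (x + 1) * (l * (1 - u)) ^ 7 = ((x + 1) * (1 - u) ^ 7) * l ^ 7 := by ring
    rw [this]
    exact mul_le_mul_of_nonneg_right hkey hlpow.le
  have hargl : (2:ℝ) ≤ (x + 1) * (l * (1 - u)) ^ 7 + 1 := by
    have : (1:ℝ) ≤ (l * (1 - u)) ^ 7 := one_le_pow₀ hl'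
    nlinarith
  have hargl2 : (2:ℝ) ≤ x * l ^ 7 + 1 := by
    nlinarith [harg]
  have hGmono : Real.Gamma ((x + 1) * (l * (1 - u)) ^ 7 + 1)
      ≤ Real.Gamma (x * l ^ 7 + 1) := by
    rcases eq_or_lt_of_le harg with h | h
    · rw [h]
    · exact le_of_lt (Real.Gamma_strictMonoOn_Ici hargl
        (le_trans hargl2 (by linarith) : ((x:ℝ) * l ^ 7 + 1) ∈ Set.Ici 2) (by linarith))
  have hGa : 0 < Real.Gamma ((x + 1) * (l * (1 - u)) ^ 7 + 1) :=
    Real.Gamma_pos_of_pos (by linarith)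
  have hGx1 : 0 < Real.Gamma (x + 1) := Real.Gamma_pos_of_pos hx1
  have hGx2 : Real.Gamma (x + 1 + 1) = (x + 1) * Real.Gamma (x + 1) :=
    Real.Gamma_add_one (by positivity)
  unfold fGamma
  rw [hGx2]
  have heq : x * (x + 1) ^ 2 * ((x + 1) *
      (Real.Gamma ((x + 1) * (l * (1 - u)) ^ 7 + 1) / ((x + 1) * Real.Gamma (x + 1))) ^ 3)
      = x * (Real.Gamma ((x + 1) * (l * (1 - u)) ^ 7 + 1) / Real.Gamma (x + 1)) ^ 3 := by
    field_simp
  rw [heq]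
  gcongr
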